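/- Assume the abstract VHI data hypotheses with α_Ψ < m_A, and assume additionally that A is a potential operator, i.e., there exists a functional F_A : V → ℝ such that for all u, v ∈ V, the limit as t → 0 of (F_A(u + t v) − F_A(u))/t exists and equals ⟨Au, v⟩. Define the energy functional E(v) := F_A(v) + Φ(v) + Ψ(v) − ⟨f, v⟩ for v ∈ V. Then the minimization problem: find u ∈ K with E(u) = inf{E(v) : v ∈ K} has a unique solution u ∈ K, and this u is also the unique solution of the variational-hemivariational inequality: u ∈ K and ⟨Au, v − u⟩ + Φ(v) − Φ(u) + Ψ⁰(u; v − u) ≥ ⟨f, v − u⟩ for all v ∈ K. -/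

import Mathlib

open Filter Topology RealInnerProductSpace

/-- The Clarke (generalized) directional derivative of `f` at `u` in direction `v`. -/
noncomputable def clarkeDeriv {X : Type*} [NormedAddCommGroup X] [NormedSpace ℝ X]
    (f : X → ℝ) (u v : X) : ℝ :=
  Filter.limsup (fun p : X × ℝ => (f (p.1 + p.2 • v) - f p.1) / p.2)
    ((𝓝 u) ×ˢ 𝓝[>] (0:ℝ))

section Infra

variable {X : Type*} [NormedAddCommGroup X] [NormedSpace ℝ X]

/-- difference quotient -/
noncomputable def cq (f : X → ℝ) (v : X) (p : X × ℝ) : ℝ :=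
  (f (p.1 + p.2 • v) - f p.1) / p.2

lemma clarkeDeriv_eq (f : X → ℝ) (u v : X) :
    clarkeDeriv f u v = Filter.limsup (cq f v) ((𝓝 u) ×ˢ 𝓝[>] (0:ℝ)) := rfl

lemma cq_bound (f : X → ℝ) (x : X)
    (hl : ∃ (L : NNReal) (s : Set X), s ∈ 𝓝 x ∧ LipschitzOnWith L f s) :
    ∃ C : ℝ, 0 ≤ C ∧ ∀ v : X, ∀ᶠ p in (𝓝 x) ×ˢ 𝓝[>] (0:ℝ), |cq f v p| ≤ C * ‖v‖ := by
  obtain ⟨L, s, hs, hlip⟩ := hl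
  obtain ⟨ε, hε, hball⟩ := Metric.mem_nhds_iff.1 hs
  refine ⟨L, L.coe_nonneg, fun v => ?_⟩
  have h1 : Metric.ball x (ε/2) ∈ 𝓝 x := Metric.ball_mem_nhds x (by linarith)
  have h2 : Set.Ioo (0:ℝ) (ε/(2*(‖v‖+1))) ∈ 𝓝[>] (0:ℝ) := by
    apply Ioo_mem_nhdsGT_of_mem
    constructor
    · rfl
    · positivity
  filter_upwards [Filter.prod_mem_prod h1 h2] with p hp
  obtain ⟨hp1, hp2⟩ := hp
  have hp2' : 0 < p.2 := hp2.1
  have hmem1 : p.1 ∈ s := hball (by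
    have := hp1
    simp only [Metric.mem_ball] at this ⊢
    linarith)
  have hnv : p.2 * ‖v‖ < ε/2 := by
    have h3 : p.2 < ε/(2*(‖v‖+1)) := hp2.2
    have h4 : ‖v‖ < ‖v‖ + 1 := by linarith
    calc p.2 * ‖v‖ ≤ p.2 * (‖v‖+1) := by nlinarith [norm_nonneg v]
    _ < ε/(2*(‖v‖+1)) * (‖v‖+1) := by
        apply mul_lt_mul_of_pos_right h3 (by positivity)
    _ = ε/2 := by field_simp
  have hmem2 : p.1 + p.2 • v ∈ s := hball (by
    simp only [Metric.mem_ball, dist_eq_norm] at hp1 ⊢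
    calc ‖p.1 + p.2 • v - x‖ ≤ ‖p.1 - x‖ + ‖p.2 • v‖ := by
          rw [add_sub_right_comm]; exact norm_add_le _ _
    _ < ε/2 + ε/2 := by
        apply add_lt_add hp1
        rw [norm_smul, Real.norm_eq_abs, abs_of_pos hp2']
        exact hnv
    _ = ε := by ring)
  have hd := hlip.dist_le_mul _ hmem2 _ hmem1
  rw [Real.dist_eq, dist_eq_norm, add_sub_cancel_left, norm_smul, Real.norm_eq_abs,
    abs_of_pos hp2'] at hd
  rw [cq, abs_div, abs_of_pos hp2', div_le_iff₀ hp2']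
  calc |f (p.1 + p.2 • v) - f p.1| ≤ L * (p.2 * ‖v‖) := hd
  _ = L * ‖v‖ * p.2 := by ring

lemma neBot_clarkeFilter (x : X) : ((𝓝 x) ×ˢ 𝓝[>] (0:ℝ)).NeBot := by infer_instance

/-- Upper helper: limsup of quotients pulled back along a map is at most the Clarke derivative. -/
lemma limsup_le_clarke {α : Type*} {G : Filter α} [G.NeBot] (f : X → ℝ) (x v : X)
    (hl : ∃ (L : NNReal) (s : Set X), s ∈ 𝓝 x ∧ LipschitzOnWith L f s)
    (m : α → X × ℝ) (hm : Tendsto m G ((𝓝 x) ×ˢ 𝓝[>] (0:ℝ))) :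
    Filter.limsup (fun a => cq f v (m a)) G ≤ clarkeDeriv f x v := by
  obtain ⟨C, hC, hbd'⟩ := cq_bound f x hl
  have hbd := hbd' v
  have hmap : Filter.limsup (fun a => cq f v (m a)) G = Filter.limsup (cq f v) (Filter.map m G) := by
    simp only [Filter.limsup, Filter.map_map]; rfl
  rw [hmap, clarkeDeriv_eq]
  haveI := neBot_clarkeFilter x
  refine Filter.limsup_le_limsup_of_le hm ?_ ?_
  · -- cobounded under ≤ on map m G : from lower bound
    apply Filter.IsBoundedUnder.isCoboundedUnder_le
    refine ⟨-(C * ‖v‖), ?_⟩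
    rw [Filter.eventually_map, Filter.eventually_map]
    filter_upwards [hm.eventually hbd] with a ha
    linarith [neg_abs_le (cq f v (m a)), abs_nonneg (cq f v (m a))]
  · refine ⟨C * ‖v‖, ?_⟩
    rw [Filter.eventually_map]
    filter_upwards [hbd] with p hp using (abs_le.1 hp).2

/-- Lower helper: if along some map into the Clarke filter the quotients are eventually ≥ c,
then c ≤ clarkeDeriv. -/
lemma le_clarke_of_eventually {α : Type*} {G : Filter α} [G.NeBot] (f : X → ℝ) (x v : X)
    (hl : ∃ (L : NNReal) (s : Set X), s ∈ 𝓝 x ∧ LipschitzOnWith L f s)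
    (m : α → X × ℝ) (hm : Tendsto m G ((𝓝 x) ×ˢ 𝓝[>] (0:ℝ))) {c : ℝ}
    (hq : ∀ᶠ a in G, c ≤ cq f v (m a)) :
    c ≤ clarkeDeriv f x v := by
  obtain ⟨C, hC, hbd'⟩ := cq_bound f x hl
  have hbd := hbd' v
  refine le_trans ?_ (limsup_le_clarke f x v hl m hm)
  refine Filter.le_limsup_of_le ?_ ?_
  · exact ⟨C * ‖v‖, Filter.eventually_map.2 (by
      filter_upwards [hm.eventually hbd] with a ha using (abs_le.1 ha).2)⟩
  · intro b hb
    obtain ⟨a, ha1, ha2⟩ := (hq.and hb).exists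
    exact le_trans ha1 ha2

lemma le_clarke_of_tendsto {α : Type*} {G : Filter α} [G.NeBot] (f : X → ℝ) (x v : X)
    (hl : ∃ (L : NNReal) (s : Set X), s ∈ 𝓝 x ∧ LipschitzOnWith L f s)
    (m : α → X × ℝ) (hm : Tendsto m G ((𝓝 x) ×ˢ 𝓝[>] (0:ℝ))) {c : ℝ} {r : α → ℝ}
    (hr : ∀ᶠ a in G, r a ≤ cq f v (m a)) (hc : Tendsto r G (𝓝 c)) :
    c ≤ clarkeDeriv f x v := by
  by_contra hlt
  push_neg at hlt
  set d := clarkeDeriv f x v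
  have hε : (0:ℝ) < (c - d)/2 := by linarith
  have hev : ∀ᶠ a in G, c - (c-d)/2 < r a :=
    hc.eventually (eventually_gt_nhds (by linarith : c - (c-d)/2 < c))
  have : c - (c-d)/2 ≤ d := by
    refine le_clarke_of_eventually f x v hl m hm ?_
    filter_upwards [hev, hr] with a h1 h2
    linarith
  linarith

/-- Clarke derivative bounds via local Lipschitz constant-free form. -/
lemma clarke_bound (f : X → ℝ) (x : X)
    (hl : ∃ (L : NNReal) (s : Set X), s ∈ 𝓝 x ∧ LipschitzOnWith L f s) :
    ∃ C : ℝ, 0 ≤ C ∧ ∀ v : X, |clarkeDeriv f x v| ≤ C * ‖v‖ := by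
  obtain ⟨C, hC, hbd'⟩ := cq_bound f x hl
  refine ⟨C, hC, fun v => ?_⟩
  have hbd := hbd' v
  haveI := neBot_clarkeFilter x
  rw [clarkeDeriv_eq, abs_le]
  constructor
  · refine Filter.le_limsup_of_le ?_ ?_
    · refine ⟨C * ‖v‖, ?_⟩
      rw [Filter.eventually_map]
      filter_upwards [hbd] with p hp using (abs_le.1 hp).2
    · intro b hb
      obtain ⟨p, hp1, hp2⟩ := (hbd.and hb).exists
      linarith [(abs_le.1 hp1).1]
  · refine Filter.limsup_le_of_le ?_ ?_
    · apply Filter.IsBoundedUnder.isCoboundedUnder_le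
      refine ⟨-(C * ‖v‖), ?_⟩
      rw [Filter.eventually_map]
      filter_upwards [hbd] with p hp using (abs_le.1 hp).1
    · filter_upwards [hbd] with p hp using (abs_le.1 hp).2

end Infra
section Infra2

variable {X : Type*} [NormedAddCommGroup X] [NormedSpace ℝ X]

lemma continuousAt_of_liplocal (f : X → ℝ) (x : X)
    (hl : ∃ (L : NNReal) (s : Set X), s ∈ 𝓝 x ∧ LipschitzOnWith L f s) :
    ContinuousAt f x := by
  obtain ⟨L, s, hs, hlip⟩ := hl
  exact (hlip.continuousOn).continuousAt hs

lemma tendsto_mul_pos_nhdsWithin {c : ℝ} (hc : 0 < c) :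
    Tendsto (fun t : ℝ => c * t) (𝓝[>] (0:ℝ)) (𝓝[>] (0:ℝ)) := by
  apply tendsto_nhdsWithin_of_tendsto_nhds_of_eventually_within
  · have : Tendsto (fun t : ℝ => c * t) (𝓝 (0:ℝ)) (𝓝 (c * 0)) :=
      (continuous_const.mul continuous_id).tendsto 0
    simpa using this.mono_left nhdsWithin_le_nhds
  · filter_upwards [self_mem_nhdsWithin] with t ht
    exact mul_pos hc ht

lemma clarke_smul_le (f : X → ℝ) (x v : X)
    (hl : ∃ (L : NNReal) (s : Set X), s ∈ 𝓝 x ∧ LipschitzOnWith L f s)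
    {c : ℝ} (hc : 0 < c) :
    clarkeDeriv f x (c • v) ≤ c * clarkeDeriv f x v := by
  haveI := neBot_clarkeFilter x
  obtain ⟨C, hC, hbd'⟩ := cq_bound f x hl
  set F := (𝓝 x) ×ˢ 𝓝[>] (0:ℝ) with hF
  set m : X × ℝ → X × ℝ := fun p => (p.1, c * p.2) with hm_def
  have hm : Tendsto m F F := Filter.Tendsto.prodMap tendsto_id (tendsto_mul_pos_nhdsWithin hc)
  have heq : ∀ᶠ p in F, cq f (c • v) p = c * cq f v (m p) := by
    filter_upwards [Filter.prod_mem_prod (Filter.univ_mem) self_mem_nhdsWithin] with p hp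
    have hp2 : (0:ℝ) < p.2 := hp.2
    simp only [cq, hm_def]
    rw [smul_smul, mul_comm p.2 c]
    field_simp
  rw [clarkeDeriv_eq, Filter.limsup_congr heq]
  have hbd : ∀ᶠ a in F, |cq f v (m a)| ≤ C * ‖v‖ := hm.eventually (hbd' v)
  have hb1 : Filter.IsBoundedUnder (· ≤ ·) F (fun a => cq f v (m a)) := by
    refine ⟨C * ‖v‖, ?_⟩; rw [Filter.eventually_map]
    filter_upwards [hbd] with a ha using (abs_le.1 ha).2
  have hb2 : Filter.IsCoboundedUnder (· ≤ ·) F (fun a => cq f v (m a)) := by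
    apply Filter.IsBoundedUnder.isCoboundedUnder_le
    refine ⟨-(C * ‖v‖), ?_⟩; rw [Filter.eventually_map]
    filter_upwards [hbd] with a ha using (abs_le.1 ha).1
  have hb3 : Filter.IsBoundedUnder (· ≤ ·) F (fun a => c * cq f v (m a)) := by
    refine ⟨c * (C * ‖v‖), ?_⟩; rw [Filter.eventually_map]
    filter_upwards [hbd] with a ha
    exact mul_le_mul_of_nonneg_left (abs_le.1 ha).2 hc.le
  have hb4 : Filter.IsCoboundedUnder (· ≤ ·) F (fun a => c * cq f v (m a)) := by
    apply Filter.IsBoundedUnder.isCoboundedUnder_le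
    refine ⟨c * (-(C * ‖v‖)), ?_⟩; rw [Filter.eventually_map]
    filter_upwards [hbd] with a ha
    exact mul_le_mul_of_nonneg_left (abs_le.1 ha).1 hc.le
  have hiso := (OrderIso.mulLeft₀ c hc).limsup_apply (u := fun a => cq f v (m a)) (f := F)
    hb1 hb2 hb3 hb4
  simp only [OrderIso.mulLeft₀_apply] at hiso
  rw [← hiso]
  exact mul_le_mul_of_nonneg_left (limsup_le_clarke f x v hl m hm) hc.le

lemma clarke_smul_ge (f : X → ℝ) (x v : X)
    (hl : ∃ (L : NNReal) (s : Set X), s ∈ 𝓝 x ∧ LipschitzOnWith L f s)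
    {c : ℝ} (hc : 0 < c) :
    c * clarkeDeriv f x v ≤ clarkeDeriv f x (c • v) := by
  have h := clarke_smul_le f x (c • v) hl (inv_pos.2 hc)
  rw [smul_smul, inv_mul_cancel₀ hc.ne', one_smul] at h
  calc c * clarkeDeriv f x v ≤ c * (c⁻¹ * clarkeDeriv f x (c • v)) :=
        mul_le_mul_of_nonneg_left h hc.le
  _ = clarkeDeriv f x (c • v) := by field_simp

lemma clarke_neg_ge (f : X → ℝ) (x v : X)
    (hl : ∃ (L : NNReal) (s : Set X), s ∈ 𝓝 x ∧ LipschitzOnWith L f s) :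
    -clarkeDeriv f x v ≤ clarkeDeriv f x (-v) := by
  haveI := neBot_clarkeFilter x
  obtain ⟨C, hC, hbd'⟩ := cq_bound f x hl
  set F := (𝓝 x) ×ˢ 𝓝[>] (0:ℝ) with hF
  set m : X × ℝ → X × ℝ := fun p => (p.1 + p.2 • v, p.2) with hm_def
  have hm : Tendsto m F F := by
    refine Filter.Tendsto.prodMk ?_ tendsto_snd
    have h1 : Tendsto (fun p : X × ℝ => p.1) F (𝓝 x) := tendsto_fst
    have h2 : Tendsto (fun p : X × ℝ => p.2) F (𝓝 (0:ℝ)) :=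
      tendsto_snd.mono_right nhdsWithin_le_nhds
    have := h1.add (h2.smul_const v)
    simpa using this
  have hbnd : Filter.IsBoundedUnder (· ≤ ·) F (cq f v) := by
    refine ⟨C * ‖v‖, ?_⟩; rw [Filter.eventually_map]
    filter_upwards [hbd' v] with p hp using (abs_le.1 hp).2
  by_contra hlt
  push_neg at hlt
  set d := clarkeDeriv f x (-v)
  set e := clarkeDeriv f x v
  have hε : (0:ℝ) < (-e - d)/2 := by linarith
  have hev : ∀ᶠ p in F, cq f v p < e + (-e-d)/2 := by
    apply Filter.eventually_lt_of_limsup_lt _ hbnd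
    rw [← clarkeDeriv_eq]
    linarith
  have hkey : -(e + (-e-d)/2) ≤ d := by
    refine le_clarke_of_eventually f x (-v) hl m hm ?_
    filter_upwards [hev, Filter.prod_mem_prod (Filter.univ_mem (f := 𝓝 x)) self_mem_nhdsWithin]
      with p hp1 hp2
    have : cq f (-v) (m p) = -cq f v p := by
      simp only [cq, hm_def, smul_neg]
      rw [add_neg_cancel_right]
      ring
    rw [this]
    linarith
  linarith

end Infra2
section Lebourg

variable {X : Type*} [NormedAddCommGroup X] [NormedSpace ℝ X]

lemma lip_line (f : X → ℝ) (u h : X)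
    (hf : ∀ y : X, ∃ (L : NNReal) (s : Set X), s ∈ 𝓝 y ∧ LipschitzOnWith L f s) (t : ℝ) :
    ∃ (L : NNReal) (s : Set ℝ), s ∈ 𝓝 t ∧ LipschitzOnWith L (fun τ : ℝ => f (u + τ • h)) s := by
  obtain ⟨L, s, hs, hlip⟩ := hf (u + t • h)
  have hcont : Continuous (fun τ : ℝ => u + τ • h) :=
    continuous_const.add (continuous_id.smul continuous_const)
  refine ⟨L * ‖h‖₊, (fun τ : ℝ => u + τ • h) ⁻¹' s, ?_, ?_⟩
  · exact hcont.continuousAt.preimage_mem_nhds hs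
  · have haff : LipschitzWith ‖h‖₊ (fun τ : ℝ => u + τ • h) := by
      apply LipschitzWith.of_dist_le_mul
      intro a b
      simp only [dist_eq_norm, add_sub_add_left_eq_sub, ← sub_smul, norm_smul,
        Real.norm_eq_abs, Real.dist_eq]
      rw [mul_comm]
      rfl
    have := hlip.comp haff.lipschitzOnWith (Set.mapsTo_preimage (fun τ : ℝ => u + τ • h) s)
    exact this

lemma clarke_line_le (f : X → ℝ) (u h : X) (c d : ℝ)
    (hl : ∃ (L : NNReal) (s : Set X), s ∈ 𝓝 (u + c • h) ∧ LipschitzOnWith L f s) :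
    clarkeDeriv (fun τ : ℝ => f (u + τ • h)) c d ≤ clarkeDeriv f (u + c • h) (d • h) := by
  haveI : ((𝓝 c) ×ˢ 𝓝[>] (0:ℝ)).NeBot := neBot_clarkeFilter c
  set m : ℝ × ℝ → X × ℝ := fun p => (u + p.1 • h, p.2) with hm_def
  have hm : Tendsto m ((𝓝 c) ×ˢ 𝓝[>] (0:ℝ)) ((𝓝 (u + c • h)) ×ˢ 𝓝[>] (0:ℝ)) := by
    refine Filter.Tendsto.prodMk ?_ tendsto_snd
    have hcont : Continuous (fun τ : ℝ => u + τ • h) :=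
      continuous_const.add (continuous_id.smul continuous_const)
    exact (hcont.tendsto c).comp tendsto_fst
  have hq : ∀ p : ℝ × ℝ, cq (fun τ : ℝ => f (u + τ • h)) d p = cq f (d • h) (m p) := by
    intro p
    simp only [cq, hm_def]
    have hpt : u + (p.1 + p.2 • d) • h = u + p.1 • h + p.2 • (d • h) := by
      rw [smul_eq_mul]; module
    rw [hpt]
  rw [clarkeDeriv_eq]
  have : Filter.limsup (cq (fun τ : ℝ => f (u + τ • h)) d) ((𝓝 c) ×ˢ 𝓝[>] (0:ℝ))
      = Filter.limsup (fun p => cq f (d • h) (m p)) ((𝓝 c) ×ˢ 𝓝[>] (0:ℝ)) := by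
    apply Filter.limsup_congr
    exact Filter.Eventually.of_forall hq
  rw [this]
  exact limsup_le_clarke f (u + c • h) (d • h) hl m hm

lemma lebourg (φ : ℝ → ℝ)
    (hφ : ∀ t : ℝ, ∃ (L : NNReal) (s : Set ℝ), s ∈ 𝓝 t ∧ LipschitzOnWith L φ s)
    {s t : ℝ} (hst : s < t) :
    ∃ c ∈ Set.Ioo s t, φ s - φ t ≤ (t - s) * clarkeDeriv φ c (-1) := by
  have hts : (0:ℝ) < t - s := by linarith
  have φcont : Continuous φ := continuous_iff_continuousAt.2 fun x => continuousAt_of_liplocal φ x (hφ x)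
  set M : ℝ := (φ t - φ s)/(t - s) with hM
  set θ : ℝ → ℝ := fun τ => φ τ - τ * M with hθ
  have θcont : Continuous θ := φcont.sub (continuous_id.mul continuous_const)
  have θst : θ s = θ t := by
    simp only [hθ, hM]
    field_simp
    ring
  have key : ∀ c ∈ Set.Ioo s t, (IsMinOn θ (Set.Icc s t) c ∨ IsMaxOn θ (Set.Icc s t) c) →
      -M ≤ clarkeDeriv φ c (-1) := by
    rintro c ⟨hcs, hct⟩ (hmin | hmax)
    · -- interior min : use λ ↦ (c, λ)
      haveI : (𝓝[>] (0:ℝ)).NeBot := inferInstance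
      refine le_clarke_of_eventually (G := 𝓝[>] (0:ℝ)) φ c (-1) (hφ c)
        (fun lam => (c, lam)) ?_ ?_
      · exact Filter.Tendsto.prodMk tendsto_const_nhds (by exact tendsto_id)
      · filter_upwards [Ioo_mem_nhdsGT_of_mem
          (show (0:ℝ) ∈ Set.Ico (0:ℝ) (c - s) from ⟨le_refl _, by linarith⟩)]
          with lam hlam
        obtain ⟨hl0, hlcs⟩ := hlam
        have hmem : c - lam ∈ Set.Icc s t := ⟨by linarith, by linarith⟩
        have := hmin hmem
        simp only [hθ] at this
        have hsm : c + lam • (-1:ℝ) = c - lam := by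
          rw [smul_eq_mul]; ring
        rw [cq, hsm]
        rw [le_div_iff₀ hl0]
        simp only [Set.mem_setOf_eq] at this
        nlinarith
    · -- interior max : use λ ↦ (c+λ, λ)
      haveI : (𝓝[>] (0:ℝ)).NeBot := inferInstance
      refine le_clarke_of_eventually (G := 𝓝[>] (0:ℝ)) φ c (-1) (hφ c)
        (fun lam => (c + lam, lam)) ?_ ?_
      · refine Filter.Tendsto.prodMk ?_ (by exact tendsto_id)
        have h0 : Tendsto (fun lam : ℝ => c + lam) (𝓝 (0:ℝ)) (𝓝 (c + 0)) :=
          tendsto_const_nhds.add tendsto_id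
        rw [add_zero] at h0
        exact h0.mono_left nhdsWithin_le_nhds
      · filter_upwards [Ioo_mem_nhdsGT_of_mem
          (show (0:ℝ) ∈ Set.Ico (0:ℝ) (t - c) from ⟨le_refl _, by linarith⟩)]
          with lam hlam
        obtain ⟨hl0, hlct⟩ := hlam
        have hmem : c + lam ∈ Set.Icc s t := ⟨by linarith, by linarith⟩
        have := hmax hmem
        simp only [hθ, Set.mem_setOf_eq] at this
        have hsm : c + lam + lam • (-1:ℝ) = c := by
          rw [smul_eq_mul]; ring
        rw [cq, hsm]
        rw [le_div_iff₀ hl0]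
        nlinarith
  have hne : (Set.Icc s t).Nonempty := ⟨s, Set.mem_Icc.2 ⟨le_refl s, hst.le⟩⟩
  obtain ⟨c₁, hc₁m, hc₁⟩ := isCompact_Icc.exists_isMinOn hne θcont.continuousOn
  obtain ⟨c₂, hc₂m, hc₂⟩ := isCompact_Icc.exists_isMaxOn hne θcont.continuousOn
  have final : ∀ c, -M ≤ clarkeDeriv φ c (-1) → φ s - φ t ≤ (t - s) * clarkeDeriv φ c (-1) := by
    intro c hc
    calc φ s - φ t = (t - s) * (-M) := by
          simp only [hM]; field_simp; ring
    _ ≤ (t - s) * clarkeDeriv φ c (-1) := mul_le_mul_of_nonneg_left hc hts.le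
  by_cases hc₁i : c₁ ∈ Set.Ioo s t
  · exact ⟨c₁, hc₁i, final c₁ (key c₁ hc₁i (Or.inl hc₁))⟩
  by_cases hc₂i : c₂ ∈ Set.Ioo s t
  · exact ⟨c₂, hc₂i, final c₂ (key c₂ hc₂i (Or.inr hc₂))⟩
  · -- θ is constant on Icc: midpoint is a min
    have hval : ∀ c ∈ Set.Icc s t, c ∉ Set.Ioo s t → θ c = θ s := by
      intro c hc hci
      rcases Set.mem_Icc.1 hc with ⟨h1, h2⟩
      rcases lt_or_eq_of_le h1 with h1' | h1'
      · rcases lt_or_eq_of_le h2 with h2' | h2'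
        · exact absurd ⟨h1', h2'⟩ hci
        · rw [h2', θst]
      · rw [← h1']
    have hθc₁ : θ c₁ = θ s := hval c₁ hc₁m hc₁i
    have hθc₂ : θ c₂ = θ s := hval c₂ hc₂m hc₂i
    have hci : (s + t)/2 ∈ Set.Ioo s t := ⟨by linarith, by linarith⟩
    have hmin : IsMinOn θ (Set.Icc s t) ((s + t)/2) := by
      intro τ hτ
      have h1 := hc₁ hτ
      have h2 := hc₂ (show (s + t)/2 ∈ Set.Icc s t from ⟨by linarith, by linarith⟩)
      simp only [Set.mem_setOf_eq] at h1 h2 ⊢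
      rw [hθc₂] at h2
      rw [hθc₁] at h1
      exact le_trans h2 h1
    exact ⟨(s + t)/2, hci, final _ (key _ hci (Or.inl hmin))⟩

end Lebourg
section MVT

variable {X : Type*} [NormedAddCommGroup X] [NormedSpace ℝ X]

lemma sum_aux (n : ℕ) : ∑ i ∈ Finset.range n, ((i:ℝ)+1) = n*(n+1)/2 := by
  induction n with
  | zero => simp
  | succ k ih =>
    rw [Finset.sum_range_succ, ih]
    push_cast
    ring

lemma clarke_mvt (Ψ : X → ℝ)
    (hlip : ∀ y : X, ∃ (L : NNReal) (s : Set X), s ∈ 𝓝 y ∧ LipschitzOnWith L Ψ s)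
    (αΨ : ℝ) (hα : 0 ≤ αΨ)
    (hmon : ∀ v₁ v₂ : X,
      clarkeDeriv Ψ v₁ (v₂ - v₁) + clarkeDeriv Ψ v₂ (v₁ - v₂) ≤ αΨ * ‖v₁ - v₂‖^2)
    (u h : X) :
    Ψ u - Ψ (u + h) ≤ αΨ/2 * ‖h‖^2 - clarkeDeriv Ψ u h := by
  set φ : ℝ → ℝ := fun τ => Ψ (u + τ • h) with hφ_def
  have hφ := lip_line Ψ u h hlip
  set P := clarkeDeriv Ψ u h with hP
  set N := ‖h‖^2 with hN
  have hN0 : 0 ≤ N := by rw [hN]; positivity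
  have step : ∀ s t : ℝ, 0 ≤ s → s < t → t ≤ 1 →
      φ s - φ t ≤ (t - s) * (αΨ * t * N - P) := by
    intro s t hs hst ht1
    obtain ⟨c, ⟨hcs, hct⟩, hcineq⟩ := lebourg φ hφ hst
    have hc0 : 0 < c := lt_of_le_of_lt hs hcs
    have hchain := clarke_line_le Ψ u h c (-1) (hlip (u + c • h))
    have hneg : ((-1:ℝ)) • h = -h := by simp
    rw [hneg] at hchain
    have hpair := hmon u (u + c • h)
    have e1 : (u + c • h) - u = c • h := by abel
    have e2 : u - (u + c • h) = c • (-h) := by rw [smul_neg]; abel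
    rw [e1, e2] at hpair
    have hnorm : ‖c • -h‖^2 = c^2 * N := by
      rw [hN, norm_smul, norm_neg, Real.norm_eq_abs, abs_of_pos hc0, mul_pow]
    rw [hnorm] at hpair
    have hs1 := clarke_smul_ge Ψ u h (hlip u) hc0
    have hs2 := clarke_smul_ge Ψ (u + c • h) (-h) (hlip _) hc0
    set Y := clarkeDeriv Ψ (u + c • h) (-h) with hY
    have hkey : Y ≤ αΨ * c * N - P := by
      have h1 : c * (P + Y) ≤ c * (αΨ * c * N) := by
        rw [← hP] at hs1
        nlinarith
      have h2 : P + Y ≤ αΨ * c * N := (mul_le_mul_iff_right₀ hc0).1 h1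
      linarith
    calc φ s - φ t ≤ (t - s) * clarkeDeriv φ c (-1) := hcineq
    _ ≤ (t - s) * Y := mul_le_mul_of_nonneg_left hchain (by linarith)
    _ ≤ (t - s) * (αΨ * t * N - P) := by
        apply mul_le_mul_of_nonneg_left _ (by linarith)
        have : αΨ * c * N ≤ αΨ * t * N := by
          nlinarith [mul_nonneg (mul_nonneg hα hN0) (show (0:ℝ) ≤ t - c by linarith)]
        linarith
  have tele : ∀ n : ℕ, 1 ≤ n → φ 0 - φ 1 ≤ αΨ * N * ((n+1)/(2*n)) - P := by
    intro n hn
    have hn0 : (0:ℝ) < n := by exact_mod_cast hn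
    have hsum : φ 0 - φ 1 = ∑ i ∈ Finset.range n, (φ (i/n) - φ ((i+1)/n)) := by
      have := (Finset.sum_range_sub' (fun i : ℕ => φ ((i:ℝ)/n)) n).symm
      push_cast at this
      simpa [div_self hn0.ne'] using this
    rw [hsum]
    have hterm : ∀ i ∈ Finset.range n,
        φ ((i:ℝ)/n) - φ (((i:ℝ)+1)/n) ≤ (αΨ*N/(n*n))*((i:ℝ)+1) - P/n := by
      intro i hi
      have hi' : (i:ℝ) < n := by exact_mod_cast Finset.mem_range.1 hi
      have hi2 : ((i:ℝ)+1) ≤ n := by exact_mod_cast Nat.succ_le_of_lt (Finset.mem_range.1 hi)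
      have h1 : (0:ℝ) ≤ (i:ℝ)/n := by positivity
      have h2 : (i:ℝ)/n < ((i:ℝ)+1)/n := by
        apply div_lt_div_of_pos_right _ hn0
        linarith
      have h3 : ((i:ℝ)+1)/n ≤ 1 := by
        rw [div_le_one hn0]
        exact hi2
      have := step ((i:ℝ)/n) (((i:ℝ)+1)/n) h1 h2 h3
      have heq : (((i:ℝ)+1)/n - (i:ℝ)/n) * (αΨ * (((i:ℝ)+1)/n) * N - P)
          = (αΨ*N/(n*n))*((i:ℝ)+1) - P/n := by
        field_simp
        ring
      rw [heq] at this
      exact this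
    calc ∑ i ∈ Finset.range n, (φ ((i:ℝ)/n) - φ (((i:ℝ)+1)/n))
        ≤ ∑ i ∈ Finset.range n, ((αΨ*N/(n*n))*((i:ℝ)+1) - P/n) := Finset.sum_le_sum hterm
    _ = (αΨ*N/(n*n)) * (∑ i ∈ Finset.range n, ((i:ℝ)+1)) - n * (P/n) := by
        rw [Finset.sum_sub_distrib, ← Finset.mul_sum, Finset.sum_const, Finset.card_range,
          nsmul_eq_mul]
    _ = αΨ * N * ((n+1)/(2*n)) - P := by
        rw [sum_aux]
        field_simp
  have hφ0 : φ 0 = Ψ u := by simp [hφ_def]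
  have hφ1 : φ 1 = Ψ (u + h) := by simp [hφ_def]
  have t1 : Tendsto (fun n : ℕ => ((n:ℝ)+1)/(2*n)) atTop (𝓝 (1/2)) := by
    have base : Tendsto (fun n : ℕ => (1 + 1/(n:ℝ))/2) atTop (𝓝 ((1+0)/2)) :=
      (tendsto_const_nhds.add tendsto_one_div_atTop_nhds_zero_nat).div_const 2
    have heq : ∀ᶠ n : ℕ in atTop, (1 + 1/(n:ℝ))/2 = ((n:ℝ)+1)/(2*n) := by
      filter_upwards [Filter.eventually_ge_atTop 1] with n hn
      have hn0 : (0:ℝ) < n := by exact_mod_cast hn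
      rw [div_eq_div_iff (by positivity) (by positivity)]
      field_simp
    have := base.congr' heq
    simpa using this
  have hlim : Tendsto (fun n : ℕ => αΨ * N * (((n:ℝ)+1)/(2*n)) - P) atTop
      (𝓝 (αΨ * N * (1/2) - P)) :=
    (tendsto_const_nhds.mul t1).sub tendsto_const_nhds
  have hfin : φ 0 - φ 1 ≤ αΨ * N * (1/2) - P := by
    apply ge_of_tendsto hlim
    filter_upwards [Filter.eventually_ge_atTop 1] with n hn
    exact tele n hn
  rw [hφ0, hφ1] at hfin
  linarith

end MVT
section FAsec

variable {X : Type*} [NormedAddCommGroup X] [NormedSpace ℝ X]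

lemma hasDerivAt_line (FA : X → ℝ) (A : X → (X →L[ℝ] ℝ))
    (hFA : ∀ u v : X,
      Tendsto (fun t : ℝ => (FA (u + t • v) - FA u) / t) (𝓝[≠] (0:ℝ)) (𝓝 (A u v)))
    (u h : X) (t : ℝ) :
    HasDerivAt (fun τ : ℝ => FA (u + τ • h)) (A (u + t • h) h) t := by
  rw [hasDerivAt_iff_tendsto_slope]
  have hshift : Tendsto (fun s : ℝ => s - t) (𝓝[≠] t) (𝓝[≠] (0:ℝ)) := by
    apply tendsto_nhdsWithin_of_tendsto_nhds_of_eventually_within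
    · have : Tendsto (fun s : ℝ => s - t) (𝓝 t) (𝓝 (t - t)) :=
        (continuous_id.sub continuous_const).tendsto t
      rw [sub_self] at this
      exact this.mono_left nhdsWithin_le_nhds
    · filter_upwards [self_mem_nhdsWithin] with s hs
      exact sub_ne_zero.2 hs
  have hcomp := (hFA (u + t • h) h).comp hshift
  apply hcomp.congr
  intro s
  have hpt : u + t • h + (s - t) • h = u + s • h := by module
  simp only [Function.comp, hpt, slope_def_field]

lemma FA_lower (FA : X → ℝ) (A : X → (X →L[ℝ] ℝ))
    (hFA : ∀ u v : X,
      Tendsto (fun t : ℝ => (FA (u + t • v) - FA u) / t) (𝓝[≠] (0:ℝ)) (𝓝 (A u v)))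
    (mA : ℝ) (hmA : 0 < mA)
    (hAmon : ∀ v₁ v₂ : X, (A v₁ - A v₂) (v₁ - v₂) ≥ mA * ‖v₁ - v₂‖ ^ 2)
    (u h : X) :
    A u h + mA/2 * ‖h‖^2 ≤ FA (u + h) - FA u := by
  set p : ℝ → ℝ := fun t => FA (u + t • h) - t * (A u h) - mA/2 * ‖h‖^2 * t^2 with hp_def
  have hp : ∀ t : ℝ, HasDerivAt p (A (u + t • h) h - A u h - mA * ‖h‖^2 * t) t := by
    intro t
    have h1 := hasDerivAt_line FA A hFA u h t
    have h2 : HasDerivAt (fun τ : ℝ => τ * (A u h)) (A u h) t := hasDerivAt_mul_const _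
    have h3 : HasDerivAt (fun τ : ℝ => mA/2 * ‖h‖^2 * τ^2) (mA/2 * ‖h‖^2 * (2 * t)) t := by
      have := (hasDerivAt_pow 2 t).const_mul (mA/2 * ‖h‖^2)
      simpa using this
    have := (h1.sub h2).sub h3
    refine this.congr_deriv ?_
    ring
  have hmono : MonotoneOn p (Set.Icc (0:ℝ) 1) := by
    refine monotoneOn_of_deriv_nonneg (convex_Icc 0 1)
      (fun x _ => (hp x).continuousAt.continuousWithinAt)
      (fun x _ => (hp x).differentiableAt.differentiableWithinAt) ?_
    · intro t ht
      rw [interior_Icc] at ht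
      rw [(hp t).deriv]
      obtain ⟨ht0, ht1⟩ := ht
      have hm := hAmon (u + t • h) u
      have e1 : (u + t • h) - u = t • h := by abel
      rw [e1] at hm
      have e2 : (A (u + t • h) - A u) (t • h) = t * ((A (u + t • h)) h - (A u) h) := by
        rw [map_smul, ContinuousLinearMap.sub_apply]
        simp [smul_eq_mul]
      have e3 : ‖t • h‖^2 = t^2 * ‖h‖^2 := by
        rw [norm_smul, Real.norm_eq_abs, abs_of_pos ht0, mul_pow]
      rw [e2, e3] at hm
      have : mA * ‖h‖^2 * t ≤ (A (u + t • h)) h - (A u) h := by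
        have := (mul_le_mul_iff_right₀ ht0).1 (by nlinarith : t * (mA * ‖h‖^2 * t) ≤ t * ((A (u + t • h)) h - (A u) h))
        linarith
      linarith
  have := hmono (Set.mem_Icc.2 ⟨le_refl 0, zero_le_one⟩) (Set.mem_Icc.2 ⟨zero_le_one, le_refl 1⟩) zero_le_one
  simp only [hp_def, zero_smul, add_zero, one_smul, zero_mul, sub_zero, zero_pow, mul_zero,
    mul_one, one_pow] at this
  linarith

lemma FA_upper (FA : X → ℝ) (A : X → (X →L[ℝ] ℝ))
    (hFA : ∀ u v : X,
      Tendsto (fun t : ℝ => (FA (u + t • v) - FA u) / t) (𝓝[≠] (0:ℝ)) (𝓝 (A u v)))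
    (LA : ℝ) (hLA : 0 < LA)
    (hALip : ∀ v₁ v₂ : X, ‖A v₁ - A v₂‖ ≤ LA * ‖v₁ - v₂‖)
    (u h : X) :
    FA (u + h) - FA u ≤ A u h + LA/2 * ‖h‖^2 := by
  set p : ℝ → ℝ := fun t => t * (A u h) + LA/2 * ‖h‖^2 * t^2 - FA (u + t • h) with hp_def
  have hp : ∀ t : ℝ, HasDerivAt p (A u h + LA * ‖h‖^2 * t - A (u + t • h) h) t := by
    intro t
    have h1 := hasDerivAt_line FA A hFA u h t
    have h2 : HasDerivAt (fun τ : ℝ => τ * (A u h)) (A u h) t := hasDerivAt_mul_const _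
    have h3 : HasDerivAt (fun τ : ℝ => LA/2 * ‖h‖^2 * τ^2) (LA/2 * ‖h‖^2 * (2 * t)) t := by
      have := (hasDerivAt_pow 2 t).const_mul (LA/2 * ‖h‖^2)
      simpa using this
    have := (h2.add h3).sub h1
    refine this.congr_deriv ?_
    ring
  have hmono : MonotoneOn p (Set.Icc (0:ℝ) 1) := by
    refine monotoneOn_of_deriv_nonneg (convex_Icc 0 1)
      (fun x _ => (hp x).continuousAt.continuousWithinAt)
      (fun x _ => (hp x).differentiableAt.differentiableWithinAt) ?_
    · intro t ht
      rw [interior_Icc] at ht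
      rw [(hp t).deriv]
      obtain ⟨ht0, ht1⟩ := ht
      have hb : (A (u + t • h)) h - (A u) h ≤ LA * ‖h‖^2 * t := by
        have h1 : (A (u + t • h)) h - (A u) h = (A (u + t • h) - A u) h := by
          rw [ContinuousLinearMap.sub_apply]
        have h2 := (A (u + t • h) - A u).le_opNorm h
        have h3 := hALip (u + t • h) u
        have e1 : (u + t • h) - u = t • h := by abel
        rw [e1] at h3
        have e2 : ‖t • h‖ = t * ‖h‖ := by
          rw [norm_smul, Real.norm_eq_abs, abs_of_pos ht0]
        rw [e2] at h3
        calc (A (u + t • h)) h - (A u) h ≤ |(A (u + t • h) - A u) h| := by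
              rw [← h1] at *; exact le_abs_self _
        _ ≤ ‖A (u + t • h) - A u‖ * ‖h‖ := by
              rw [← Real.norm_eq_abs]; exact h2
        _ ≤ LA * (t * ‖h‖) * ‖h‖ := by
              apply mul_le_mul_of_nonneg_right h3 (norm_nonneg h)
        _ = LA * ‖h‖^2 * t := by ring
      linarith
  have := hmono (Set.mem_Icc.2 ⟨le_refl 0, zero_le_one⟩) (Set.mem_Icc.2 ⟨zero_le_one, le_refl 1⟩) zero_le_one
  simp only [hp_def, zero_smul, add_zero, one_smul, zero_mul, sub_zero, zero_pow, mul_zero,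
    mul_one, one_pow, zero_add, zero_sub] at this
  linarith

end FAsec
set_option maxHeartbeats 1600000 in
theorem stmt7 {V : Type*} [NormedAddCommGroup V] [InnerProductSpace ℝ V] [CompleteSpace V]
    (K : Set V) (hKne : K.Nonempty) (hKcl : IsClosed K) (hKcv : Convex ℝ K)
    (A : V → (V →L[ℝ] ℝ)) (LA : ℝ) (hLA : 0 < LA)
    (hALip : ∀ v₁ v₂ : V, ‖A v₁ - A v₂‖ ≤ LA * ‖v₁ - v₂‖)
    (mA : ℝ) (hmA : 0 < mA)
    (hAmon : ∀ v₁ v₂ : V, (A v₁ - A v₂) (v₁ - v₂) ≥ mA * ‖v₁ - v₂‖ ^ 2)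
    (Φ : V → ℝ) (hΦcv : ConvexOn ℝ Set.univ Φ) (hΦcont : Continuous Φ)
    (Ψ : V → ℝ)
    (hΨlip : ∀ u : V, ∃ (L : NNReal) (s : Set V), s ∈ 𝓝 u ∧ LipschitzOnWith L Ψ s)
    (αΨ : ℝ) (hαΨ : 0 ≤ αΨ)
    (hΨmon : ∀ v₁ v₂ : V,
      clarkeDeriv Ψ v₁ (v₂ - v₁) + clarkeDeriv Ψ v₂ (v₁ - v₂) ≤ αΨ * ‖v₁ - v₂‖ ^ 2)
    (f : V →L[ℝ] ℝ) (hsmall : αΨ < mA)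
    (FA : V → ℝ)
    (hFA : ∀ u v : V,
      Tendsto (fun t : ℝ => (FA (u + t • v) - FA u) / t) (𝓝[≠] (0:ℝ)) (𝓝 (A u v)))
    (E : V → ℝ) (hE : ∀ v : V, E v = FA v + Φ v + Ψ v - f v) :
    (∃! u : V, u ∈ K ∧ ∀ v ∈ K, E u ≤ E v) ∧
    (∀ u : V, (u ∈ K ∧ ∀ v ∈ K, E u ≤ E v) ↔
      (u ∈ K ∧ ∀ v ∈ K,
        (A u) (v - u) + Φ v - Φ u + clarkeDeriv Ψ u (v - u) ≥ f (v - u))) := by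
  have hΨmvt : ∀ u h : V, Ψ u - Ψ (u + h) ≤ αΨ/2 * ‖h‖^2 - clarkeDeriv Ψ u h :=
    clarke_mvt Ψ hΨlip αΨ hαΨ hΨmon
  have hFAlow : ∀ u h : V, A u h + mA/2 * ‖h‖^2 ≤ FA (u + h) - FA u :=
    FA_lower FA A hFA mA hmA hAmon
  have hFAup : ∀ u h : V, FA (u + h) - FA u ≤ A u h + LA/2 * ‖h‖^2 :=
    FA_upper FA A hFA LA hLA hALip
  set c2 : ℝ := (mA - αΨ)/2 with hc2
  have hc2pos : 0 < c2 := by rw [hc2]; linarith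
  clear_value c2
  -- (I) a VHI solution is a strict minimizer
  have keyI : ∀ u ∈ K, (∀ v ∈ K,
      (A u) (v - u) + Φ v - Φ u + clarkeDeriv Ψ u (v - u) ≥ f (v - u)) →
      ∀ v ∈ K, E u + c2 * ‖v - u‖^2 ≤ E v := by
    intro u hu hvhi v hv
    have hsub : u + (v - u) = v := by abel
    have h1 := hFAlow u (v - u); rw [hsub] at h1
    have h2 := hΨmvt u (v - u); rw [hsub] at h2
    have hV := hvhi v hv
    have hf : f v - f u = f (v - u) := (map_sub f v u).symm
    rw [hE v, hE u, hc2]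
    linarith
  -- (II) a minimizer solves the VHI
  have keyII : ∀ u : V, (u ∈ K ∧ ∀ v ∈ K, E u ≤ E v) →
      (∀ v ∈ K, (A u) (v - u) + Φ v - Φ u + clarkeDeriv Ψ u (v - u) ≥ f (v - u)) := by
    rintro u ⟨hu, hmin⟩ v hv
    haveI : (𝓝[>] (0:ℝ)).NeBot := inferInstance
    set h : V := v - u with hh
    have hm : Tendsto (fun t : ℝ => ((u : V), t)) (𝓝[>] (0:ℝ)) ((𝓝 u) ×ˢ 𝓝[>] (0:ℝ)) :=
      Filter.Tendsto.prodMk tendsto_const_nhds (by exact tendsto_id)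
    have hr : ∀ᶠ t in 𝓝[>] (0:ℝ),
        (f h - (Φ v - Φ u) - (FA (u + t • h) - FA u)/t) ≤ cq Ψ h (u, t) := by
      filter_upwards [Ioo_mem_nhdsGT_of_mem
        (show (0:ℝ) ∈ Set.Ico (0:ℝ) 1 from ⟨le_refl _, one_pos⟩)] with t ht
      obtain ⟨ht0, ht1⟩ := ht
      have hptK : u + t • h ∈ K := by
        have hpt : u + t • h = (1 - t) • u + t • v := by rw [hh]; module
        rw [hpt]
        exact hKcv hu hv (by linarith) ht0.le (by ring)
      have hEmin := hmin _ hptK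
      rw [hE u, hE (u + t • h)] at hEmin
      have hΦb : Φ (u + t • h) ≤ (1 - t) * Φ u + t * Φ v := by
        have hpt : u + t • h = (1 - t) • u + t • v := by rw [hh]; module
        rw [hpt]
        have := hΦcv.2 (Set.mem_univ u) (Set.mem_univ v)
          (show (0:ℝ) ≤ 1 - t by linarith) ht0.le (by ring)
        simpa [smul_eq_mul] using this
      have hfl : f (u + t • h) = f u + t * f h := by
        rw [map_add, map_smul]; simp [smul_eq_mul]
      rw [cq]
      simp only
      rw [le_div_iff₀ ht0]
      have hexp : (f h - (Φ v - Φ u) - (FA (u + t • h) - FA u)/t) * t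
          = t * f h - t * (Φ v - Φ u) - (FA (u + t • h) - FA u) := by
        field_simp
      rw [hexp]
      linarith
    have hlim : Tendsto (fun t : ℝ => f h - (Φ v - Φ u) - (FA (u + t • h) - FA u)/t)
        (𝓝[>] (0:ℝ)) (𝓝 (f h - (Φ v - Φ u) - A u h)) := by
      have hmono : (𝓝[>] (0:ℝ)) ≤ (𝓝[≠] (0:ℝ)) :=
        nhdsWithin_mono 0 (fun x hx => ne_of_gt hx)
      exact tendsto_const_nhds.sub ((hFA u h).mono_left hmono)
    have := le_clarke_of_tendsto Ψ u h (hΨlip u) _ hm hr hlim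
    linarith
  -- midpoint strong convexity
  have keyMid : ∀ x y : V, E ((1/2 : ℝ) • (x + y)) ≤ (E x + E y)/2 - c2/4 * ‖y - x‖^2 := by
    intro x y
    set mpt : V := (1/2 : ℝ) • (x + y) with hmpt
    set h : V := (1/2 : ℝ) • (y - x) with hhd
    have hx : x = mpt + (-h) := by rw [hmpt, hhd]; module
    have hy : y = mpt + h := by rw [hmpt, hhd]; module
    have h1 := hFAlow mpt (-h); rw [← hx] at h1
    have h2 := hFAlow mpt h; rw [← hy] at h2
    have h3 := hΨmvt mpt (-h); rw [← hx] at h3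
    have h4 := hΨmvt mpt h; rw [← hy] at h4
    have hnegA : A mpt (-h) = -(A mpt h) := map_neg _ _
    have hnegn : ‖-h‖ = ‖h‖ := norm_neg _
    rw [hnegA, hnegn] at h1
    rw [hnegn] at h3
    have hneg := clarke_neg_ge Ψ mpt h (hΨlip mpt)
    have hΦb : Φ mpt ≤ (1/2) * Φ x + (1/2) * Φ y := by
      have hpt : mpt = (1/2 : ℝ) • x + (1/2 : ℝ) • y := by rw [hmpt]; module
      rw [hpt]
      have := hΦcv.2 (Set.mem_univ x) (Set.mem_univ y)
        (by norm_num : (0:ℝ) ≤ 1/2) (by norm_num : (0:ℝ) ≤ 1/2) (by norm_num)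
      simpa [smul_eq_mul] using this
    have hfm : f mpt = (f x + f y)/2 := by
      rw [hmpt, map_smul, map_add]
      simp [smul_eq_mul]
      ring
    have hns : ‖h‖^2 = ‖y - x‖^2/4 := by
      rw [hhd, norm_smul]
      simp [Real.norm_eq_abs]
      ring
    rw [hE mpt, hE x, hE y]
    rw [hns] at h1 h2 h3 h4
    rw [hc2]
    linarith
  -- lower bound for E
  obtain ⟨u₀, hu₀⟩ := hKne
  obtain ⟨CΨ, hCΨ0, hCΨ⟩ := clarke_bound Ψ u₀ (hΨlip u₀)
  have hΦlow : ∃ CΦ : ℝ, 0 ≤ CΦ ∧ ∀ v : V, Φ u₀ - CΦ * ‖v - u₀‖ ≤ Φ v := by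
    obtain ⟨δ, hδ0, hδ⟩ := Metric.continuousAt_iff.1 (hΦcont.continuousAt (x := u₀)) 1 one_pos
    set s : ℝ := δ/2 with hsdef
    have hs0 : 0 < s := by rw [hsdef]; linarith
    refine ⟨1/s, by positivity, fun v => ?_⟩
    by_cases hv : v = u₀
    · rw [hv]
      simp
    · set r : ℝ := ‖v - u₀‖ with hrdef
      have hr0 : 0 < r := by
        rw [hrdef, norm_pos_iff]
        exact sub_ne_zero.2 hv
      have hsr : 0 < s + r := by linarith
      set c : ℝ := s/r with hcdef
      set a : ℝ := r/(s+r) with hadef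
      set b : ℝ := s/(s+r) with hbdef
      have ha0 : 0 ≤ a := by positivity
      have hb0 : 0 < b := by positivity
      have hab : a + b = 1 := by
        rw [hadef, hbdef, ← add_div, add_comm r s, div_self hsr.ne']
      have hac : a * c = b := by rw [hadef, hbdef, hcdef]; field_simp
      set w : V := u₀ - c • (v - u₀) with hwdef
      have hpoint : a • w + b • v = u₀ := by
        have hexp : a • w + b • v = (a+b) • u₀ + (b - a*c) • (v - u₀) := by
          rw [hwdef]; module
        rw [hexp, hab, hac, sub_self, zero_smul, add_zero, one_smul]
      have hwball : Φ w ≤ Φ u₀ + 1 := by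
        have hdist : dist w u₀ < δ := by
          rw [hwdef, dist_eq_norm]
          have : u₀ - c • (v - u₀) - u₀ = -(c • (v - u₀)) := by abel
          rw [this, norm_neg, norm_smul, Real.norm_eq_abs, abs_of_pos (by positivity : (0:ℝ) < c)]
          rw [hcdef, ← hrdef]
          rw [div_mul_cancel₀ _ hr0.ne']
          rw [hsdef]; linarith
        have := hδ hdist
        rw [Real.dist_eq] at this
        have := (abs_le.1 this.le).2
        linarith
      have hcv := hΦcv.2 (Set.mem_univ w) (Set.mem_univ v) ha0 hb0.le hab
      rw [hpoint] at hcv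
      simp only [smul_eq_mul] at hcv
      have hineq : b * Φ u₀ - a ≤ b * Φ v := by
        have h1 : a * Φ w ≤ a * (Φ u₀ + 1) := mul_le_mul_of_nonneg_left hwball ha0
        have h2 : a * Φ u₀ + b * Φ u₀ = Φ u₀ := by rw [← add_mul, hab, one_mul]
        linarith
      have hkey : b * (Φ u₀ - (1/s) * r) = b * Φ u₀ - a := by
        rw [hadef, hbdef]
        field_simp
      have := hineq
      rw [← hkey] at this
      have hfin := le_of_mul_le_mul_left (by linarith : b * (Φ u₀ - (1/s)*r) ≤ b * Φ v) hb0
      linarith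
  obtain ⟨CΦ, hCΦ0, hCΦ⟩ := hΦlow
  set C₁ : ℝ := ‖A u₀‖ + CΦ + CΨ + ‖f‖ with hC₁
  clear_value C₁
  have hElow : ∀ v : V, E u₀ - C₁ * ‖v - u₀‖ + c2 * ‖v - u₀‖^2 ≤ E v := by
    intro v
    have hsub : u₀ + (v - u₀) = v := by abel
    have h1 := hFAlow u₀ (v - u₀); rw [hsub] at h1
    have h2 := hΨmvt u₀ (v - u₀); rw [hsub] at h2
    have h3 := hCΦ v
    have h4 : |A u₀ (v - u₀)| ≤ ‖A u₀‖ * ‖v - u₀‖ := by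
      rw [← Real.norm_eq_abs]; exact (A u₀).le_opNorm _
    have h5 : |clarkeDeriv Ψ u₀ (v - u₀)| ≤ CΨ * ‖v - u₀‖ := hCΨ _
    have h6 : |f (v - u₀)| ≤ ‖f‖ * ‖v - u₀‖ := by
      rw [← Real.norm_eq_abs]; exact f.le_opNorm _
    have hf : f v - f u₀ = f (v - u₀) := (map_sub f v u₀).symm
    rw [hE v, hE u₀, hC₁, hc2]
    have ha1 := abs_le.1 h4
    have ha2 := abs_le.1 h5
    have ha3 := abs_le.1 h6
    linarith [ha1.1, ha2.1, ha3.2, h1, h2, h3]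
  have hbdd : ∀ v : V, E u₀ - C₁^2/(4*c2) ≤ E v := by
    intro v
    have h := hElow v
    have key : 0 ≤ c2*‖v - u₀‖^2 - C₁*‖v - u₀‖ + C₁^2/(4*c2) := by
      have expand : c2*‖v - u₀‖^2 - C₁*‖v - u₀‖ + C₁^2/(4*c2)
          = (2*c2*‖v - u₀‖ - C₁)^2/(4*c2) := by
        field_simp
        ring
      rw [expand]
      positivity
    linarith
  -- infimum and minimizing sequence
  set S : Set ℝ := E '' K with hSdef
  have hSne : S.Nonempty := ⟨E u₀, u₀, hu₀, rfl⟩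
  have hSbdd : BddBelow S := ⟨E u₀ - C₁^2/(4*c2), by
    rintro x ⟨v, hvK, rfl⟩
    exact hbdd v⟩
  set d : ℝ := sInf S with hd
  have hdle : ∀ v ∈ K, d ≤ E v := fun v hv => csInf_le hSbdd ⟨v, hv, rfl⟩
  have hseq : ∀ n : ℕ, ∃ w ∈ K, E w < d + 1/(n+1) := by
    intro n
    obtain ⟨x, ⟨w, hw, rfl⟩, hx⟩ := exists_lt_of_csInf_lt hSne
      (show d < d + 1/((n:ℝ)+1) from lt_add_of_pos_right d (by positivity))
    exact ⟨w, hw, hx⟩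
  choose w hwK hwE using hseq
  have hdlo : ∀ n : ℕ, d ≤ E (w n) := fun n => hdle _ (hwK n)
  -- Cauchy
  have hCau : CauchySeq w := by
    apply cauchySeq_of_le_tendsto_0 (fun N : ℕ => Real.sqrt ((4/c2) * (1/(N+1))))
    · intro n m N hn hm
      have hmid : (1/2 : ℝ) • (w n + w m) ∈ K := by
        rw [smul_add]
        exact hKcv (hwK n) (hwK m) (by norm_num) (by norm_num) (by norm_num)
      have hd1 := hdle _ hmid
      have h2 := keyMid (w n) (w m)
      have hεn : 1/((n:ℝ)+1) ≤ 1/((N:ℝ)+1) := by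
        apply one_div_le_one_div_of_le (by positivity)
        have : (N:ℝ) ≤ n := by exact_mod_cast hn
        linarith
      have hεm : 1/((m:ℝ)+1) ≤ 1/((N:ℝ)+1) := by
        apply one_div_le_one_div_of_le (by positivity)
        have : (N:ℝ) ≤ m := by exact_mod_cast hm
        linarith
      rw [dist_eq_norm]
      apply Real.le_sqrt_of_sq_le
      have hsq : c2/4 * ‖w m - w n‖^2 ≤ 1/((N:ℝ)+1) := by
        have hn' := hwE n
        have hm' := hwE m
        linarith
      rw [norm_sub_rev]
      rw [div_mul_eq_mul_div, le_div_iff₀ hc2pos]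
      linarith
    · have h1 : Tendsto (fun N : ℕ => (4/c2) * (1/((N:ℝ)+1))) atTop (𝓝 ((4/c2) * 0)) :=
        tendsto_const_nhds.mul tendsto_one_div_add_atTop_nhds_zero_nat
      rw [mul_zero] at h1
      have h2 := (Real.continuous_sqrt.tendsto 0).comp h1
      simpa [Function.comp_def] using h2
  obtain ⟨ustar, hustar⟩ := cauchySeq_tendsto_of_complete hCau
  have huK : ustar ∈ K := hKcl.mem_of_tendsto hustar (Filter.Eventually.of_forall hwK)
  -- continuity of E
  have hFAcont : Continuous FA := by
    rw [continuous_iff_continuousAt]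
    intro u
    have h0 : Tendsto (fun v : V => ‖v - u‖) (𝓝 u) (𝓝 0) := by
      have hc : Continuous (fun v : V => ‖v - u‖) := (continuous_id.sub continuous_const).norm
      have := hc.tendsto u
      simpa using this
    have hb : Tendsto (fun v : V => ‖A u‖*‖v - u‖ + LA/2*‖v - u‖^2) (𝓝 u) (𝓝 0) := by
      have hb1 : Tendsto (fun v : V => ‖A u‖*‖v - u‖) (𝓝 u) (𝓝 (‖A u‖ * 0)) :=
        Filter.Tendsto.mul (tendsto_const_nhds (x := ‖A u‖)) h0
      have hb2 : Tendsto (fun v : V => LA/2*‖v - u‖^2) (𝓝 u) (𝓝 (LA/2 * 0^2)) :=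
        Filter.Tendsto.mul (tendsto_const_nhds (x := LA/2)) (h0.pow 2)
      have := hb1.add hb2
      simpa using this
    have hsq : Tendsto (fun v : V => FA v - FA u) (𝓝 u) (𝓝 0) := by
      apply squeeze_zero_norm _ hb
      intro v
      have hsub : u + (v - u) = v := by abel
      have h1 := hFAlow u (v - u); rw [hsub] at h1
      have h2 := hFAup u (v - u); rw [hsub] at h2
      have h4 : |A u (v - u)| ≤ ‖A u‖ * ‖v - u‖ := by
        rw [← Real.norm_eq_abs]; exact (A u).le_opNorm _
      have ha := abs_le.1 h4
      rw [Real.norm_eq_abs, abs_le]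
      constructor
      · nlinarith [sq_nonneg ‖v - u‖, norm_nonneg (v - u)]
      · nlinarith [sq_nonneg ‖v - u‖, norm_nonneg (v - u)]
    have := hsq.add (tendsto_const_nhds (x := FA u))
    simpa [ContinuousAt] using this
  have hΨcont : Continuous Ψ :=
    continuous_iff_continuousAt.2 fun x => continuousAt_of_liplocal Ψ x (hΨlip x)
  have hEcont : Continuous E := by
    have hEeq : E = fun v => FA v + Φ v + Ψ v - f v := funext hE
    rw [hEeq]
    exact ((hFAcont.add hΦcont).add hΨcont).sub f.continuous
  have hEu : Tendsto (fun n => E (w n)) atTop (𝓝 (E ustar)) :=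
    (hEcont.tendsto _).comp hustar
  have hEle : E ustar ≤ d := by
    have hlim2 : Tendsto (fun n : ℕ => d + 1/((n:ℝ)+1)) atTop (𝓝 (d + 0)) :=
      tendsto_const_nhds.add tendsto_one_div_add_atTop_nhds_zero_nat
    rw [add_zero] at hlim2
    exact le_of_tendsto_of_tendsto' hEu hlim2 (fun n => (hwE n).le)
  have hminstar : ∀ v ∈ K, E ustar ≤ E v := fun v hv => le_trans hEle (hdle v hv)
  -- conclusion
  have iff_part : ∀ u : V, (u ∈ K ∧ ∀ v ∈ K, E u ≤ E v) ↔
      (u ∈ K ∧ ∀ v ∈ K,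
        (A u) (v - u) + Φ v - Φ u + clarkeDeriv Ψ u (v - u) ≥ f (v - u)) := by
    intro u
    constructor
    · intro hmem
      exact ⟨hmem.1, keyII u hmem⟩
    · rintro ⟨hu, hvhi⟩
      refine ⟨hu, fun v hv => ?_⟩
      have h1 := keyI u hu hvhi v hv
      nlinarith [mul_nonneg hc2pos.le (sq_nonneg ‖v - u‖)]
  refine ⟨⟨ustar, ⟨huK, hminstar⟩, ?_⟩, iff_part⟩
  rintro y ⟨hyK, hymin⟩
  have hvhi := keyII ustar ⟨huK, hminstar⟩
  have h1 := keyI ustar huK hvhi y hyK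
  have h2 : E y ≤ E ustar := hymin ustar huK
  have h3 : ‖y - ustar‖^2 ≤ 0 := by nlinarith
  have h4 : ‖y - ustar‖ = 0 := by nlinarith [sq_nonneg ‖y - ustar‖, norm_nonneg (y - ustar)]
  have h5 : y - ustar = 0 := norm_eq_zero.1 h4
  have : y = ustar := by
    have := sub_eq_zero.1 h5
    exact this
  exact this
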